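/- The number of ε-assignments from U to V equals the number of injective maps from subsets of U into V: |𝒜_ε(U,V)| = |ℐ(U,V)|. -/

import Mathlib

/-- An ε-assignment from `U` to `V`: a map `φ : U_ε → 𝒫(V_ε)` (with `ε` modelled by
`none`) such that `|φ(u)| = 1` for every `u ∈ U`, `|φ⁻¹[v]| = 1` for every `v ∈ V`,
and `ε ∈ φ(ε)`. -/
def IsEpsAssignment {U V : Type*} [Fintype U] [DecidableEq U] [DecidableEq V]
    (φ : Option U → Finset (Option V)) : Prop :=
  (∀ u : U, (φ (some u)).card = 1) ∧
  (∀ v : V, (Finset.univ.filter (fun x : Option U => some v ∈ φ x)).card = 1) ∧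
  none ∈ φ none

section Aux

variable {U V : Type*} [Fintype U] [DecidableEq U] [Fintype V] [DecidableEq V]

/-- The partial function extracted from the first condition of an ε-assignment. -/
noncomputable def epsToFun (φ : Option U → Finset (Option V))
    (h : ∀ u : U, (φ (some u)).card = 1) : U → Option V :=
  fun u => (Finset.card_eq_one.mp (h u)).choose

lemma epsToFun_spec (φ : Option U → Finset (Option V))
    (h : ∀ u : U, (φ (some u)).card = 1) (u : U) :
    φ (some u) = {epsToFun φ h u} :=
  (Finset.card_eq_one.mp (h u)).choose_spec

/-- The ε-assignment constructed from a partial injection. -/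
def funToEps (f : U → Option V) : Option U → Finset (Option V) :=
  fun x => x.elim
    (insert none ((Finset.univ.filter (fun v : V => ∀ u, f u ≠ some v)).image some))
    (fun u => {f u})

lemma eps_unique (φ : Option U → Finset (Option V)) (h : IsEpsAssignment φ)
    {v : V} {x y : Option U} (hx : some v ∈ φ x) (hy : some v ∈ φ y) : x = y := by
  obtain ⟨a, ha⟩ := Finset.card_eq_one.mp (h.2.1 v)
  have hx' : x ∈ Finset.univ.filter (fun x : Option U => some v ∈ φ x) := by simp [hx]
  have hy' : y ∈ Finset.univ.filter (fun x : Option U => some v ∈ φ x) := by simp [hy]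
  rw [ha, Finset.mem_singleton] at hx' hy'
  rw [hx', hy']

lemma funToEps_isEps (f : U → Option V)
    (hf : ∀ u₁ u₂ v, f u₁ = some v → f u₂ = some v → u₁ = u₂) :
    IsEpsAssignment (funToEps f) := by
  refine ⟨fun u => by simp [funToEps], fun v => ?_, by simp [funToEps]⟩
  rw [Finset.card_eq_one]
  by_cases hv : ∃ u, f u = some v
  · obtain ⟨u, hu⟩ := hv
    refine ⟨some u, ?_⟩
    ext x
    cases x with
    | none =>
      simp only [Finset.mem_filter]
      simp only [funToEps, Option.elim, Finset.mem_filter, Finset.mem_univ, true_and,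
        Finset.mem_insert, Finset.mem_image, Finset.mem_singleton]
      constructor
      · rintro (h | ⟨w, hw, hw2⟩)
        · exact absurd h (by simp)
        · obtain rfl : w = v := by injection hw2
          exact absurd hu (hw u)
      · intro h; exact absurd h (by simp)
    | some u' =>
      simp only [Finset.mem_filter]
      simp only [funToEps, Option.elim, Finset.mem_filter, Finset.mem_univ, true_and,
        Finset.mem_singleton, Option.some.injEq]
      constructor
      · intro h; exact hf u' u v h.symm hu
      · rintro rfl; exact hu.symm
  · push_neg at hv
    refine ⟨none, ?_⟩
    ext x
    cases x with
    | none =>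
      simp only [Finset.mem_filter]
      simp only [funToEps, Option.elim, Finset.mem_filter, Finset.mem_univ, true_and,
        Finset.mem_insert, Finset.mem_image, Finset.mem_singleton]
      constructor
      · intro _; trivial
      · intro _; right; exact ⟨v, hv, rfl⟩
    | some u' =>
      simp only [Finset.mem_filter]
      simp only [funToEps, Option.elim, Finset.mem_filter, Finset.mem_univ, true_and,
        Finset.mem_singleton]
      constructor
      · intro h; exact absurd h.symm (hv u')
      · intro h; exact absurd h (by simp)

end Aux

/-- `|𝒜_ε(U,V)| = |ℐ(U,V)|`, where `ℐ(U,V)` (the injective maps from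
subsets of `U` into `V`) is encoded as the set of `f : U → Option V` injective on
their domain. -/
theorem card_epsAssignments_eq_card_partialInjections
    {U V : Type*} [Fintype U] [DecidableEq U] [Fintype V] [DecidableEq V] :
    Nat.card {φ : Option U → Finset (Option V) // IsEpsAssignment φ} =
      Nat.card {f : U → Option V // ∀ u₁ u₂ v, f u₁ = some v → f u₂ = some v → u₁ = u₂} := by
  apply Nat.card_congr
  refine
    { toFun := fun φ => ⟨epsToFun φ.1 φ.2.1, ?_⟩
      invFun := fun f => ⟨funToEps f.1, funToEps_isEps f.1 f.2⟩
      left_inv := ?_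
      right_inv := ?_ }
  · intro u₁ u₂ v h1 h2
    have s1 := epsToFun_spec φ.1 φ.2.1 u₁
    have s2 := epsToFun_spec φ.1 φ.2.1 u₂
    rw [h1] at s1; rw [h2] at s2
    have m1 : some v ∈ φ.1 (some u₁) := by rw [s1]; simp
    have m2 : some v ∈ φ.1 (some u₂) := by rw [s2]; simp
    have := eps_unique φ.1 φ.2 m1 m2
    injection this
  · rintro ⟨φ, hφ⟩
    apply Subtype.ext
    funext x
    set f := epsToFun φ hφ.1 with hfdef
    cases x with
    | some u => simpa [funToEps] using (epsToFun_spec φ hφ.1 u).symm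
    | none =>
      ext t
      cases t with
      | none => simp [funToEps, hφ.2.2]
      | some v =>
        simp only [funToEps, Option.elim, Finset.mem_insert, Finset.mem_image,
          Finset.mem_filter, Finset.mem_univ, true_and]
        constructor
        · rintro (h | ⟨w, hw, hw2⟩)
          · exact absurd h (by simp)
          · have hw' : ∀ u : U, f u ≠ some v := by
              intro u
              have : w = v := by injection hw2
              exact this ▸ hw u
            -- some v not in any φ (some u), so the unique preimage is none
            obtain ⟨a, ha⟩ := Finset.card_eq_one.mp (hφ.2.1 v)
            have hane : ∀ u : U, a ≠ some u := by
              rintro u rfl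
              have : some u ∈ Finset.univ.filter (fun x : Option U => some v ∈ φ x) := by
                rw [ha]; simp
              simp only [Finset.mem_filter] at this
              have := this.2
              rw [epsToFun_spec φ hφ.1 u] at this
              exact hw' u (Finset.mem_singleton.mp this).symm
            have : a = none := by
              cases a with
              | none => rfl
              | some u => exact absurd rfl (hane u)
            have hmem : a ∈ Finset.univ.filter (fun x : Option U => some v ∈ φ x) := by
              rw [ha]; simp
            rw [this] at hmem
            exact (Finset.mem_filter.mp hmem).2
        · intro hmem
          right
          refine ⟨v, ?_, rfl⟩
          intro u hu
          have : some v ∈ φ (some u) := by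
            rw [epsToFun_spec φ hφ.1 u, hu]; simp
          have := eps_unique φ hφ this hmem
          exact absurd this (by simp)
  · rintro ⟨f, hf⟩
    apply Subtype.ext
    funext u
    have := epsToFun_spec (funToEps f) (funToEps_isEps f hf).1 u
    simp only [funToEps, Option.elim] at this
    exact (Finset.singleton_injective this).symm
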